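/- arXiv:1312.3072 — 2 statements merged into one kernel-verified Lean document; each statement's English description precedes it below -/
import Mathlib

section
/- Every graph H is isomorphic to an induced subgraph of the Gallai graph of some graph G. Specifically, if G is the graph with vertex set V(H) ∪ {x} where x is adjacent to all vertices of V(H) and G − x is the complement of H, then the subgraph of Γ(G) induced by the edges of G incident with x is isomorphic to H. -/
open SimpleGraph

/-- The Gallai graph of `G`: vertices are the edges of `G`; two distinct edges are
adjacent iff they share an endpoint but do not span a triangle in `G`. -/
def SimpleGraph.gallai {V : Type*} (G : SimpleGraph V) : SimpleGraph G.edgeSet where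
  Adj e f := e ≠ f ∧ ∃ a b c : V, (e : Sym2 V) = s(a, b) ∧ (f : Sym2 V) = s(a, c) ∧ ¬ G.Adj b c
  symm := by
    constructor
    rintro e f ⟨hne, a, b, c, he, hf, h⟩
    exact ⟨hne.symm, a, c, b, hf, he, fun h' => h h'.symm⟩
  loopless := ⟨fun e h => h.1 rfl⟩

/-- The line graph of `G`: vertices are the edges of `G`; two distinct edges are
adjacent iff they share an endpoint. -/
def SimpleGraph.lineGraph' {V : Type*} (G : SimpleGraph V) : SimpleGraph G.edgeSet where
  Adj e f := e ≠ f ∧ ∃ a : V, a ∈ (e : Sym2 V) ∧ a ∈ (f : Sym2 V)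
  symm := by constructor; rintro e f ⟨hne, a, h1, h2⟩; exact ⟨hne.symm, a, h2, h1⟩
  loopless := ⟨fun e h => h.1 rfl⟩

/-- `G` contains an induced copy of `H`. -/
def HasInducedCopy {α V : Type*} (H : SimpleGraph α) (G : SimpleGraph V) : Prop :=
  ∃ f : α ↪ V, ∀ a b : α, H.Adj a b ↔ G.Adj (f a) (f b)

/-- A graph is chordal if it has no induced cycle of length at least 4. -/
def SimpleGraph.Chordal {V : Type*} (G : SimpleGraph V) : Prop :=
  ∀ n : ℕ, 4 ≤ n → ¬ HasInducedCopy (SimpleGraph.cycleGraph n) G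

/-- The graph on `Fin n` with the given list of edges. -/
def graphOfList (n : ℕ) (l : List (Fin n × Fin n)) : SimpleGraph (Fin n) :=
  SimpleGraph.fromRel (fun i j => (i, j) ∈ l)

/-- `F₁`, the claw `K_{1,3}`. -/
def F1 : SimpleGraph (Fin 4) := graphOfList 4 [(0,3),(1,3),(2,3)]

/-- `F₂`, the bowtie: two triangles sharing one vertex. -/
def F2 : SimpleGraph (Fin 5) := graphOfList 5 [(0,1),(0,4),(1,4),(2,3),(2,4),(3,4)]

/-- `F₃`, the octahedron `K_{2,2,2}`. -/
def F3 : SimpleGraph (Fin 6) := SimpleGraph.fromRel (fun i j => (i.val + 3) % 6 ≠ j.val)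

/-- `F₄`: a path `0-1-2-3`, a vertex `4` adjacent to `1,2`, and a pendant `5` adjacent to `4`. -/
def F4 : SimpleGraph (Fin 6) := graphOfList 6 [(0,1),(1,2),(2,3),(1,4),(2,4),(4,5)]

/-- `F₅`: the gem on `{0,1,2,3,4}` (path `0-3-4-2` dominated by `1`) plus vertex `5`
adjacent to the two top vertices `3,4`. -/
def F5 : SimpleGraph (Fin 6) :=
  graphOfList 6 [(0,1),(1,2),(2,4),(4,5),(5,3),(3,0),(1,3),(3,4),(4,1)]

/-- `F₆`: a path `0-1-2-3-4` plus a vertex `5` adjacent to the internal vertices `1,2,3`. -/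
def F6 : SimpleGraph (Fin 6) := graphOfList 6 [(0,1),(1,2),(2,3),(3,4),(1,5),(2,5),(3,5)]

/-- `F₇`: a path `0-1-2-3-4-5` plus a vertex `6` adjacent to the internal vertices `1,2,3,4`. -/
def F7 : SimpleGraph (Fin 7) :=
  graphOfList 7 [(0,1),(1,2),(2,3),(3,4),(4,5),(1,6),(2,6),(3,6),(4,6)]

/-- `F₈`: a path `0-1-2-3`, vertices `4` adjacent to `0,1`, `5` adjacent to `1,2`,
`6` adjacent to `2,3`, and the path `4-5-6`. -/
def F8 : SimpleGraph (Fin 7) :=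
  graphOfList 7 [(0,1),(1,2),(2,3),(3,6),(6,5),(5,4),(4,0),(4,1),(1,5),(5,2),(2,6)]

/-- `F₉`: vertices `x₁,x₂,x₃ = 0,1,2`, `y₁,y₂,y₃ = 3,4,5`, `z = 6`. -/
def F9 : SimpleGraph (Fin 7) :=
  graphOfList 7 [(0,1),(1,2),(3,4),(4,5),(0,3),(1,3),(1,4),(2,4),(2,5),(1,6),(2,6),(3,6),(4,6)]

/-- `F₈⁻`: the 6-cycle `a b e f c d = 0 1 2 3 4 5` with chords `db, bc, ce`. -/
def F8minus : SimpleGraph (Fin 6) :=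
  graphOfList 6 [(0,1),(1,2),(2,3),(3,4),(4,5),(5,0),(5,1),(1,4),(4,2)]

/-- The gem: the path `0-1-2-3` plus a dominating vertex `4`. -/
def gemGraph : SimpleGraph (Fin 5) :=
  graphOfList 5 [(0,1),(1,2),(2,3),(0,4),(1,4),(2,4),(3,4)]

/-- The diamond `K₄` minus one edge. -/
def diamondGraph : SimpleGraph (Fin 4) := graphOfList 4 [(0,1),(0,2),(0,3),(1,2),(1,3)]

/-- A set `U` is homogeneous in `G` if every vertex outside `U` is adjacent to all of
`U` or to none of `U`. -/
def SimpleGraph.Homogeneous {V : Type*} (G : SimpleGraph V) (U : Set V) : Prop :=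
  ∀ v ∉ U, (∀ u ∈ U, G.Adj v u) ∨ (∀ u ∈ U, ¬ G.Adj v u)

/-- A set of vertices is independent if no two of its vertices are adjacent. -/
def SimpleGraph.IndepSet {V : Type*} (G : SimpleGraph V) (U : Set V) : Prop :=
  ∀ u ∈ U, ∀ w ∈ U, ¬ G.Adj u w

/-- `v` is a cut-vertex of `G`: its removal separates two vertices that were reachable. -/
def SimpleGraph.IsCutVertex {V : Type*} (G : SimpleGraph V) (v : V) : Prop :=
  ∃ (x y : V) (hx : x ≠ v) (hy : y ≠ v), G.Reachable x y ∧
    ¬ (G.induce {u : V | u ≠ v}).Reachable ⟨x, hx⟩ ⟨y, hy⟩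

/-- A block of `G`: a maximal set of vertices inducing a connected subgraph without
a cut-vertex. -/
def SimpleGraph.IsBlock {V : Type*} (G : SimpleGraph V) (B : Set V) : Prop :=
  (G.induce B).Connected ∧ (∀ v, ¬ (G.induce B).IsCutVertex v) ∧
    ∀ C : Set V, B ⊆ C → (G.induce C).Connected → (∀ v, ¬ (G.induce C).IsCutVertex v) → B = C

/-- The graph `G` on `V(H) ∪ {x}` (with `x = none`) in which `x` is adjacent to all
vertices of `H` and `G - x` is the complement of `H`. -/
def auxG {α : Type*} (H : SimpleGraph α) : SimpleGraph (Option α) :=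
  SimpleGraph.fromRel (fun x y => match x, y with
    | some a, some b => ¬ H.Adj a b
    | _, _ => True)

section GallaiAux

variable {α : Type*} (H : SimpleGraph α)

lemma auxG_adj_none (a : α) : (auxG H).Adj none (some a) := by
  simp [auxG]

lemma auxG_adj_some (a b : α) :
    (auxG H).Adj (some a) (some b) ↔ a ≠ b ∧ ¬ H.Adj a b := by
  simp only [auxG, SimpleGraph.fromRel_adj, ne_eq, Option.some.injEq]
  constructor
  · rintro ⟨h1, h2 | h2⟩
    · exact ⟨h1, h2⟩
    · exact ⟨h1, fun h => h2 h.symm⟩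
  · rintro ⟨h1, h2⟩
    exact ⟨h1, Or.inl h2⟩

/-- The edge of `auxG H` joining `none` and `some a`. -/
def auxEdge (a : α) : (auxG H).edgeSet := ⟨s(none, some a), auxG_adj_none H a⟩

lemma auxEdge_injective : Function.Injective (auxEdge H) := by
  intro a b hab
  have : s((none : Option α), some a) = s((none : Option α), some b) :=
    congrArg Subtype.val hab
  rw [Sym2.eq_iff] at this
  rcases this with ⟨-, h⟩ | ⟨h, -⟩ <;> simp_all

lemma gallai_auxEdge_adj (a b : α) :
    (auxG H).gallai.Adj (auxEdge H a) (auxEdge H b) ↔ H.Adj a b := by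
  constructor
  · rintro ⟨hne, x, y, z, hxy, hxz, hn⟩
    have hab : a ≠ b := fun h => hne (by rw [h])
    have hxy' : s((none : Option α), some a) = s(x, y) := hxy
    have hxz' : s((none : Option α), some b) = s(x, z) := hxz
    rw [Sym2.eq_iff] at hxy' hxz'
    rcases hxy' with ⟨hx, hy⟩ | ⟨hy, hx⟩
    · -- x = none, y = some a
      rcases hxz' with ⟨-, hz⟩ | ⟨hz, hb⟩
      · subst hy hz
        rw [auxG_adj_some] at hn
        push_neg at hn
        by_contra hHab
        exact hHab (hn hab)
      · exact absurd (hx.trans hb.symm) (by simp)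
    · -- x = some a, y = none; then some b would equal some a
      rcases hxz' with ⟨hx', -⟩ | ⟨-, hb⟩
      · exact absurd (hx.trans hx'.symm) (by simp)
      · exact absurd (Option.some.inj (hx.trans hb.symm)) hab
  · intro h
    refine ⟨fun heq => h.ne (auxEdge_injective H heq), none, some a, some b, rfl, rfl, ?_⟩
    rw [auxG_adj_some]
    exact fun hc => hc.2 h

/-- The map from `α` to the set of edges of `auxG H` incident with `none`. -/
def auxMap (a : α) :
    {e : (auxG H).edgeSet | (none : Option α) ∈ (e : Sym2 (Option α))} :=
  ⟨auxEdge H a, by simp [auxEdge]⟩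

lemma auxMap_bijective : Function.Bijective (auxMap H) := by
  constructor
  · intro a b hab
    exact auxEdge_injective H (congrArg Subtype.val hab)
  · rintro ⟨⟨s, hs⟩, hmem⟩
    induction s using Sym2.ind with
    | _ x y =>
      simp only [Set.mem_setOf_eq, Sym2.mem_iff] at hmem
      rcases hmem with hx | hy
      · subst hx
        match y, hs with
        | some b, hs =>
          exact ⟨b, by apply Subtype.ext; apply Subtype.ext; rfl⟩
      · subst hy
        match x, hs with
        | some b, hs =>
          refine ⟨b, ?_⟩
          apply Subtype.ext; apply Subtype.ext
          exact (Sym2.eq_swap : s((none : Option α), some b) = s(some b, none))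

/-- `H` is isomorphic to the subgraph of the Gallai graph induced by edges at `none`. -/
noncomputable def auxIso :
    H ≃g ((auxG H).gallai.induce
      {e : (auxG H).edgeSet | (none : Option α) ∈ (e : Sym2 (Option α))}) where
  toEquiv := Equiv.ofBijective (auxMap H) (auxMap_bijective H)
  map_rel_iff' := by
    intro a b
    exact gallai_auxEdge_adj H a b

end GallaiAux

/-- Every graph `H` is isomorphic to an induced subgraph of some Gallai graph: the
subgraph of `Γ(auxG H)` induced by the edges incident with `x = none` is isomorphic
to `H`; in particular `Γ(auxG H)` contains an induced copy of `H`. -/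
theorem stmt_0 {α : Type*} (H : SimpleGraph α) :
    Nonempty (((auxG H).gallai.induce
        {e : (auxG H).edgeSet | (none : Option α) ∈ (e : Sym2 (Option α))}) ≃g H) ∧
    HasInducedCopy H (auxG H).gallai := by
  refine ⟨⟨(auxIso H).symm⟩, ⟨auxEdge H, auxEdge_injective H⟩, ?_⟩
  intro a b
  exact (gallai_auxEdge_adj H a b).symm
end

section
/- If G is a graph without isolated vertices, then the Gallai graph Γ(G) is connected if and only if every non-trivial homogeneous set in G is an independent set. -/
open SimpleGraph

section AuxGallaiConn

variable {V : Type*} {G : SimpleGraph V}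

/-- The edge of `G` given by an adjacency proof, as an element of `G.edgeSet`. -/
private def eMk (G : SimpleGraph V) {u v : V} (h : G.Adj u v) : G.edgeSet :=
  ⟨s(u, v), G.mem_edgeSet.mpr h⟩

private lemma eMk_symm {u v : V} (h : G.Adj u v) : eMk G h.symm = eMk G h :=
  Subtype.ext Sym2.eq_swap

private lemma gallai_adj_mk {v a b : V} (ha : G.Adj v a) (hb : G.Adj v b) (hne : a ≠ b)
    (hnadj : ¬ G.Adj a b) : G.gallai.Adj (eMk G ha) (eMk G hb) := by
  refine ⟨fun hef => hne ?_, v, a, b, rfl, rfl, hnadj⟩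
  have hval := congrArg Subtype.val hef
  simp only [eMk] at hval
  rcases Sym2.eq_iff.mp hval with ⟨-, h⟩ | ⟨h1, h2⟩
  · exact h
  · exact h2.trans h1

private lemma walk_trans {W : Type*} {H : SimpleGraph W} {P : W → Prop}
    (hstep : ∀ a b, H.Adj a b → P a → P b) :
    ∀ {a b : W}, H.Walk a b → P a → P b := by
  intro a b w
  induction w with
  | nil => exact id
  | cons h p ih => exact fun hpa => ih (hstep _ _ h hpa)

private lemma edge_rep (e : G.edgeSet) : ∃ (x y : V) (h : G.Adj x y), e = eMk G h := by
  rcases e with ⟨s, hs⟩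
  revert hs
  refine Sym2.ind (fun x y => ?_) s
  intro hs
  exact ⟨x, y, G.mem_edgeSet.mp hs, rfl⟩

private lemma precon_of_rhs (hiso : ∀ v : V, ∃ w : V, G.Adj v w)
    (hRHS : ∀ U : Set V, G.Homogeneous U → U.Nontrivial → U ≠ Set.univ → G.IndepSet U) :
    G.Preconnected := by
  intro x y
  by_contra hxy
  set C : Set V := {z | G.Reachable x z} with hC
  obtain ⟨x', hx'⟩ := hiso x
  have hxC : x ∈ C := Reachable.refl x
  have hx'C : x' ∈ C := hx'.reachable
  have hom : G.Homogeneous C := by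
    intro v hv
    right
    intro u hu hadj
    exact hv (hu.trans hadj.symm.reachable)
  have hnt : C.Nontrivial := ⟨x, hxC, x', hx'C, G.ne_of_adj hx'⟩
  have hyC : y ∉ C := hxy
  have hneu : C ≠ Set.univ := fun h => hyC (h.symm ▸ Set.mem_univ y)
  exact hRHS C hom hnt hneu x hxC x' hx'C hx'

/-- The auxiliary graph used in the key lemma: vertices of the `T`-side of `v`,
joined by edges not in `T`. -/
private def Jgraph (G : SimpleGraph V) (v : V) (T : Set G.edgeSet) : SimpleGraph V where
  Adj x y := ∃ (hx : G.Adj v x) (hy : G.Adj v y) (hxy : G.Adj x y),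
      eMk G hx ∈ T ∧ eMk G hy ∈ T ∧ eMk G hxy ∉ T
  symm := by
    constructor
    rintro x y ⟨hx, hy, hxy, t1, t2, t3⟩
    exact ⟨hy, hx, hxy.symm, t2, t1, by rwa [eMk_symm]⟩
  loopless := by
    constructor
    rintro x ⟨hx, hy, hxy, -⟩
    exact G.irrefl hxy

/-- Key lemma: if `T` is a union of Gallai components, there is no triangle `v z z'`
with `vz, vz' ∈ T` and `zz' ∉ T`, provided every nontrivial proper homogeneous set
is independent. -/
private lemma core_lemma
    (hRHS : ∀ U : Set V, G.Homogeneous U → U.Nontrivial → U ≠ Set.univ → G.IndepSet U)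
    (T : Set G.edgeSet) (hT : ∀ g g', G.gallai.Adj g g' → (g ∈ T ↔ g' ∈ T))
    {v z z' : V} (hvz : G.Adj v z) (hvz' : G.Adj v z') (hzz' : G.Adj z z')
    (h1 : eMk G hvz ∈ T) (h2 : eMk G hvz' ∈ T) (h3 : eMk G hzz' ∉ T) : False := by
  classical
  set S : Set V := {x | (Jgraph G v T).Reachable z x} with hS
  have memS : ∀ x ∈ S, ∃ h : G.Adj v x, eMk G h ∈ T := by
    intro x hx
    refine hx.elim fun w => ?_
    refine walk_trans (P := fun t => ∃ h : G.Adj v t, eMk G h ∈ T) ?_ w ⟨hvz, h1⟩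
    rintro a b ⟨hx', hy', hxy', t1, t2, t3⟩ -
    exact ⟨hy', t2⟩
  have hstep : ∀ u, u ∉ S → u ≠ v → ((∃ h : G.Adj v u, eMk G h ∈ T) ∨ ¬ G.Adj v u) →
      ∀ a b, (Jgraph G v T).Adj a b → a ∈ S → G.Adj u a → G.Adj u b := by
    intro u huS huv hsafe a b hJ haS hua
    obtain ⟨hva, hvb, hab, hTa, hTb, hTab⟩ := hJ
    have hJab : (Jgraph G v T).Adj a b := ⟨hva, hvb, hab, hTa, hTb, hTab⟩
    have hbS : b ∈ S := haS.trans hJab.reachable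
    have hub : u ≠ b := fun h => huS (h ▸ hbS)
    by_contra hnub
    have hTua : eMk G hua ∈ T := by
      rcases hsafe with ⟨hvu, hTu⟩ | hfar
      · by_contra hmem
        refine huS (haS.trans (Adj.reachable ?_))
        exact ⟨hva, hvu, hua.symm, hTa, hTu, by rw [eMk_symm]; exact hmem⟩
      · have hgal := gallai_adj_mk hua.symm hva.symm huv (fun h => hfar h.symm)
        have h' := (hT _ _ hgal).mpr (by rw [eMk_symm]; exact hTa)
        rwa [eMk_symm] at h'
    have hgal2 := gallai_adj_mk hua.symm hab hub hnub
    exact hTab ((hT _ _ hgal2).mp (by rw [eMk_symm]; exact hTua))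
  have hJzz' : (Jgraph G v T).Adj z z' := ⟨hvz, hvz', hzz', h1, h2, h3⟩
  have hzS : z ∈ S := Reachable.refl z
  have hz'S : z' ∈ S := hJzz'.reachable
  have hvS : v ∉ S := fun h => by
    obtain ⟨hadj, -⟩ := memS v h
    exact G.irrefl hadj
  have hom : G.Homogeneous S := by
    intro u huS
    by_cases huv : u = v
    · subst huv
      exact Or.inl fun x hx => (memS x hx).choose
    · have propagate : ((∃ h : G.Adj v u, eMk G h ∈ T) ∨ ¬ G.Adj v u) →
          (∀ x ∈ S, G.Adj u x) ∨ (∀ x ∈ S, ¬ G.Adj u x) := by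
        intro hsafe
        by_cases huz : G.Adj u z
        · left
          intro x hx
          refine (hx.elim fun w => walk_trans
            (P := fun t => (Jgraph G v T).Reachable z t ∧ G.Adj u t) ?_ w
            ⟨Reachable.refl z, huz⟩).2
          intro a b hJ hp
          exact ⟨hp.1.trans hJ.reachable, hstep u huS huv hsafe a b hJ hp.1 hp.2⟩
        · right
          intro x hx
          refine (hx.elim fun w => walk_trans
            (P := fun t => (Jgraph G v T).Reachable z t ∧ ¬ G.Adj u t) ?_ w
            ⟨Reachable.refl z, huz⟩).2
          intro a b hJ hp
          refine ⟨hp.1.trans hJ.reachable, fun hub => hp.2 ?_⟩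
          exact hstep u huS huv hsafe b a hJ.symm (hp.1.trans hJ.reachable) hub
      by_cases hvu : G.Adj v u
      · by_cases hTu : eMk G hvu ∈ T
        · exact propagate (Or.inl ⟨hvu, hTu⟩)
        · refine Or.inl fun x hx => ?_
          obtain ⟨hvx, hTx⟩ := memS x hx
          by_contra hnux
          have hxu : x ≠ u := by
            rintro rfl
            exact hTu hTx
          have hgal := gallai_adj_mk hvx hvu hxu (fun h => hnux h.symm)
          exact hTu ((hT _ _ hgal).mp hTx)
      · exact propagate (Or.inr hvu)
  have hnt : S.Nontrivial := ⟨z, hzS, z', hz'S, G.ne_of_adj hzz'⟩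
  have hneu : S ≠ Set.univ := fun h => hvS (h.symm ▸ Set.mem_univ v)
  exact hRHS S hom hnt hneu z hzS z' hz'S hzz'

end AuxGallaiConn

/-- For a graph `G` without isolated vertices, `Γ(G)` is connected iff every
non-trivial homogeneous set in `G` is independent. -/
theorem stmt_4 {V : Type*} [Fintype V] [Nonempty V] (G : SimpleGraph V)
    (hiso : ∀ v : V, ∃ w : V, G.Adj v w) :
    G.gallai.Connected ↔
      ∀ U : Set V, G.Homogeneous U → U.Nontrivial → U ≠ Set.univ → G.IndepSet U := by
  classical
  constructor
  · -- forward direction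
    intro hconn U hU hnt hne u hu w hw hadj
    obtain ⟨v, hv⟩ : ∃ v, v ∉ U := by
      by_contra h
      push_neg at h
      exact hne (Set.eq_univ_of_forall h)
    obtain ⟨v', hv'⟩ := hiso v
    have hreach := hconn.preconnected (eMk G hadj) (eMk G hv')
    have hP : ∀ x ∈ ((eMk G hv' : G.edgeSet) : Sym2 V), x ∈ U := by
      refine hreach.elim fun p => walk_trans
        (P := fun g : G.edgeSet => ∀ x ∈ (g : Sym2 V), x ∈ U) ?_ p ?_
      · rintro a b ⟨hne', x1, y1, z1, hga, hgb, hnyz⟩ hp t ht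
        rw [hgb] at ht
        rcases Sym2.mem_iff.mp ht with rfl | rfl
        · exact hp _ (by rw [hga]; exact Sym2.mem_mk_left _ _)
        · by_contra htU
          rcases hU t htU with hall | hnone
          · exact hnyz (hall y1 (hp y1 (by rw [hga]; exact Sym2.mem_mk_right _ _))).symm
          · refine hnone x1 (hp x1 (by rw [hga]; exact Sym2.mem_mk_left _ _)) ?_
            have hb2 := b.2
            rw [Sym2.mem_iff] at *
            have : (b : Sym2 V) ∈ G.edgeSet := b.2
            rw [hgb] at this
            exact (G.mem_edgeSet.mp this).symm
      · intro x hx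
        rcases Sym2.mem_iff.mp hx with rfl | rfl
        · exact hu
        · exact hw
    exact hv (hP v (Sym2.mem_mk_left v v'))
  · -- backward direction
    intro hRHS
    have hGpre : G.Preconnected := precon_of_rhs hiso hRHS
    rw [connected_iff]
    refine ⟨?_, ?_⟩
    · intro e f
      obtain ⟨x, y, hxy, rfl⟩ := edge_rep e
      obtain ⟨p, q, hpq, rfl⟩ := edge_rep f
      by_contra href
      set A : Set G.edgeSet := {g | G.gallai.Reachable (eMk G hxy) g} with hA
      have hTcl : ∀ g g', G.gallai.Adj g g' → (g ∈ A ↔ g' ∈ A) :=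
        fun g g' h => ⟨fun hg => hg.trans h.reachable, fun hg => hg.trans h.symm.reachable⟩
      have hfA : eMk G hpq ∉ A := href
      by_cases hmix : ∃ (v a b : V) (ha : G.Adj v a) (hb : G.Adj v b),
          eMk G ha ∈ A ∧ eMk G hb ∉ A
      · obtain ⟨v, a, b, ha, hb, haA, hbA⟩ := hmix
        have hne' : a ≠ b := by
          rintro rfl
          exact hbA haA
        have hab : G.Adj a b := by
          by_contra hnadj
          exact hbA ((hTcl _ _ (gallai_adj_mk ha hb hne' hnadj)).mp haA)
        by_cases hE : eMk G hab ∈ A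
        · exact core_lemma hRHS A hTcl ha.symm hab hb
            (by rw [eMk_symm]; exact haA) hE hbA
        · refine core_lemma hRHS Aᶜ
            (fun g g' h => by
              have := hTcl g g' h
              simp only [Set.mem_compl_iff]
              exact not_congr this)
            hb.symm hab.symm ha ?_ ?_ ?_
          · rw [eMk_symm]; exact hbA
          · rw [eMk_symm]; exact hE
          · simp only [Set.mem_compl_iff, not_not]
            exact haA
      · push_neg at hmix
        have heA : eMk G hxy ∈ A := Reachable.refl _
        have hbase : ∀ (r : V) (h : G.Adj x r), eMk G h ∈ A :=
          fun r h => hmix x y r hxy h heA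
        have hwalkP : ∀ (r : V) (h : G.Adj p r), eMk G h ∈ A := by
          refine (hGpre x p).elim fun wxp => walk_trans
            (P := fun t => ∀ (r : V) (h : G.Adj t r), eMk G h ∈ A) ?_ wxp hbase
          intro a b hG hp r h
          have h1 : eMk G hG ∈ A := hp b hG
          have h2 : eMk G hG.symm ∈ A := by rw [eMk_symm]; exact h1
          exact hmix b a r hG.symm h h2
        exact hfA (hwalkP q hpq)
    · obtain ⟨v⟩ := (inferInstance : Nonempty V)
      obtain ⟨w, hw⟩ := hiso v
      exact ⟨eMk G hw⟩
end
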